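/- Let K be a field and (V, (vᵢ)_{i∈ι}, w, d, F) a finite-dimensional weight-filtered complex as in the context. Let c ∈ ℝ, and let π : V → V be a linear map such that π ∘ d = d ∘ π, π(F_s) ⊆ F_s for all s ∈ ℝ, and the range of π is contained in the span of {vᵢ : w(i) = c}. Suppose x₀ ∈ V satisfies d x₀ = 0, π x₀ = x₀, and x₀ ∉ range d. Then Gr(x₀) = c. In particular, for every z ∈ V homologous to x₀ (i.e., z − x₀ ∈ range d), one has π z ≠ 0. -/

import Mathlib

/-- The `s`-th piece of the descending ℝ-filtration induced by the weight function `w`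
on the basis `v`: the span of the basis vectors of weight at least `s`. -/
noncomputable def filtSub {K V : Type*} [Field K] [AddCommGroup V] [Module K V]
    {ι : Type*} (v : Module.Basis ι K V) (w : ι → ℝ) (s : ℝ) : Submodule K V :=
  Submodule.span K (Set.range fun i : {i : ι // s ≤ w i} => v i.1)

/-- The filtration grading of the homology class of a cycle `x`:
`Gr(x) = sSup {s | ∃ u, x + d u ∈ F_s}`. -/
noncomputable def filtGr {K V : Type*} [Field K] [AddCommGroup V] [Module K V]
    {ι : Type*} (v : Module.Basis ι K V) (w : ι → ℝ) (d : V →ₗ[K] V) (x : V) : ℝ :=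
  sSup {s : ℝ | ∃ u : V, x + d u ∈ filtSub v w s}

lemma range_sub_eq_image {α β : Type*} (f : α → β) (p : α → Prop) :
    (Set.range fun i : {i : α // p i} => f i.1) = f '' {i | p i} := by
  ext b; constructor
  · rintro ⟨⟨i, hi⟩, rfl⟩; exact ⟨i, hi, rfl⟩
  · rintro ⟨i, hi, rfl⟩; exact ⟨⟨i, hi⟩, rfl⟩

/-- If `π` is a filtered chain map whose range lies in the span of the basis vectors
of weight exactly `c`, and `x₀` is a cycle not a boundary with `π x₀ = x₀`, then the
filtration grading of the class of `x₀` is `c`, and every `z` homologous to `x₀` has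
`π z ≠ 0`. -/
theorem grading_of_projected_cycle
    {K : Type*} [Field K]
    {V : Type*} [AddCommGroup V] [Module K V]
    {ι : Type*} [Fintype ι]
    (v : Module.Basis ι K V) (w : ι → ℝ)
    (d : V →ₗ[K] V) (hd : d ∘ₗ d = 0)
    (hdF : ∀ s : ℝ, (filtSub v w s).map d ≤ filtSub v w s)
    (c : ℝ) (π : V →ₗ[K] V)
    (hπd : π ∘ₗ d = d ∘ₗ π)
    (hπF : ∀ s : ℝ, (filtSub v w s).map π ≤ filtSub v w s)
    (hπrange : LinearMap.range π ≤
      Submodule.span K (Set.range fun i : {i : ι // w i = c} => v i.1))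
    (x₀ : V) (hx₀ : d x₀ = 0) (hπx₀ : π x₀ = x₀) (hx₀r : x₀ ∉ LinearMap.range d) :
    filtGr v w d x₀ = c ∧
      ∀ z : V, z - x₀ ∈ LinearMap.range d → π z ≠ 0 := by
  have hx₀c : x₀ ∈ Submodule.span K (Set.range fun i : {i : ι // w i = c} => v i.1) := by
    rw [← hπx₀]; exact hπrange ⟨x₀, rfl⟩
  -- second part
  have hpart2 : ∀ z : V, z - x₀ ∈ LinearMap.range d → π z ≠ 0 := by
    rintro z ⟨u, hu⟩ hz0
    apply hx₀r
    have hzeq : z = x₀ + d u := by rw [hu]; abel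
    have h1 : π z = x₀ + d (π u) := by
      rw [hzeq, map_add, hπx₀, ← LinearMap.comp_apply, hπd, LinearMap.comp_apply]
    have hzero : x₀ + d (π u) = 0 := h1.symm.trans hz0
    refine ⟨-(π u), ?_⟩
    rw [map_neg]
    exact (eq_neg_of_add_eq_zero_left hzero).symm
  refine ⟨?_, hpart2⟩
  -- grade = c
  have hmem : c ∈ {s : ℝ | ∃ u : V, x₀ + d u ∈ filtSub v w s} := by
    refine ⟨0, ?_⟩
    rw [map_zero, add_zero]
    refine Submodule.span_mono ?_ hx₀c
    rintro _ ⟨⟨i, hi⟩, rfl⟩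
    exact ⟨⟨i, le_of_eq hi.symm⟩, rfl⟩
  have hub : ∀ s ∈ {s : ℝ | ∃ u : V, x₀ + d u ∈ filtSub v w s}, s ≤ c := by
    rintro s ⟨u, hu⟩
    by_contra hlt
    push_neg at hlt
    apply hx₀r
    -- π (x₀ + d u) = x₀ + d (π u) ∈ F_s ∩ span{w = c} = 0
    have h1 : π (x₀ + d u) = x₀ + d (π u) := by
      rw [map_add, hπx₀, ← LinearMap.comp_apply, hπd, LinearMap.comp_apply]
    have h2 : x₀ + d (π u) ∈ filtSub v w s := by
      rw [← h1]; exact hπF s ⟨_, hu, rfl⟩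
    have h3 : x₀ + d (π u) ∈
        Submodule.span K (Set.range fun i : {i : ι // w i = c} => v i.1) :=
      hπrange ⟨x₀ + d u, h1⟩
    have hzero : x₀ + d (π u) = 0 := by
      rw [filtSub, range_sub_eq_image] at h2
      rw [range_sub_eq_image] at h3
      rw [Module.Basis.mem_span_image] at h2 h3
      have : (v.repr (x₀ + d (π u))).support = ∅ := by
        rw [Finset.eq_empty_iff_forall_notMem]
        intro i hi
        have hs := h2 hi
        have hc := h3 hi
        simp only [Set.mem_setOf_eq] at hs hc
        rw [hc] at hs
        exact absurd hs (not_le.mpr hlt)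
      have := Finsupp.support_eq_empty.mp (by exact_mod_cast this)
      exact (LinearEquiv.map_eq_zero_iff v.repr).mp this
    refine ⟨-(π u), ?_⟩
    rw [map_neg]
    exact (eq_neg_of_add_eq_zero_left hzero).symm
  exact le_antisymm (csSup_le ⟨c, hmem⟩ hub) (le_csSup ⟨c, hub⟩ hmem)
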